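/- For 1 < s < 2 there exists a constant c > 0 such that for all x₁, x₂ ∈ ℝ^N with (|x₁|,|x₂|) ≠ (0,0): (|x₂|^{s-2}x₂ - |x₁|^{s-2}x₁)·(x₂ - x₁) ≥ c (|x₂| + |x₁|)^{s-2} |x₂ - x₁|². -/

import Mathlib

open RealInnerProductSpace

/-- Bernoulli-based tangent inequality: for `0 < a ≤ b` and `1 < s < 2`,
`b^(s-1) - a^(s-1) ≥ (s-1) * b^(s-2) * (b-a)`. -/
lemma tangent_ineq {s a b : ℝ} (hs1 : 1 < s) (hs2 : s < 2) (ha : 0 < a) (hab : a ≤ b) :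
    (s - 1) * b ^ (s - 2) * (b - a) ≤ b ^ (s - 1) - a ^ (s - 1) := by
  have hb : 0 < b := lt_of_lt_of_le ha hab
  have hber : (1 + (a / b - 1)) ^ (s - 1) ≤ 1 + (s - 1) * (a / b - 1) := by
    apply rpow_one_add_le_one_add_mul_self
    · have : 0 < a / b := div_pos ha hb
      linarith
    · linarith
    · linarith
  rw [add_sub_cancel] at hber
  have hdiv : (a / b) ^ (s - 1) = a ^ (s - 1) / b ^ (s - 1) :=
    Real.div_rpow ha.le hb.le _
  rw [hdiv] at hber
  have hbpow : 0 < b ^ (s - 1) := Real.rpow_pos_of_pos hb _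
  have h2 : a ^ (s - 1) ≤ b ^ (s - 1) * (1 + (s - 1) * (a / b - 1)) := by
    rw [div_le_iff₀ hbpow] at hber; linarith [hber]
  have hb1 : b ^ (s - 1) = b ^ (s - 2) * b := by
    rw [← Real.rpow_add_one hb.ne' (s - 2)]; ring_nf
  have h3 : b ^ (s - 1) * (a / b) = b ^ (s - 2) * a := by
    rw [hb1]; field_simp
  have h4 : a ^ (s - 1) ≤ b ^ (s - 1) - (s - 1) * b ^ (s - 2) * (b - a) := by
    calc a ^ (s - 1) ≤ b ^ (s - 1) * (1 + (s - 1) * (a / b - 1)) := h2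
      _ = b ^ (s - 1) + (s - 1) * (b ^ (s - 1) * (a / b) - b ^ (s - 1)) := by ring
      _ = b ^ (s - 1) + (s - 1) * (b ^ (s - 2) * a - b ^ (s - 2) * b) := by rw [h3, hb1]
      _ = b ^ (s - 1) - (s - 1) * b ^ (s - 2) * (b - a) := by ring
  linarith

/-- Scalar key inequality. -/
lemma scalar_key {s a b t : ℝ} (hs1 : 1 < s) (hs2 : s < 2) (ha : 0 ≤ a) (hab : a ≤ b)
    (hb : 0 < b) (ht : |t| ≤ a * b) :
    (s - 1) * (a + b) ^ (s - 2) * (a ^ 2 + b ^ 2 - 2 * t)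
      ≤ a ^ (s - 2) * a ^ 2 + b ^ (s - 2) * b ^ 2 - (a ^ (s - 2) + b ^ (s - 2)) * t := by
  rcases eq_or_lt_of_le ha with rfl | ha
  · have ht0 : t = 0 := by
      rw [zero_mul] at ht
      exact abs_eq_zero.mp (le_antisymm ht (abs_nonneg t))
    subst ht0
    rw [Real.zero_rpow (by linarith : s - 2 ≠ 0)]
    have h2 : ((0 : ℝ) + b) ^ (s - 2) = b ^ (s - 2) := by rw [zero_add]
    rw [h2]
    have hbpow : 0 < b ^ (s - 2) := Real.rpow_pos_of_pos hb _
    nlinarith [mul_pos hbpow (pow_pos hb 2)]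
  · -- 0 < a ≤ b
    have hC : 0 < (a + b) ^ (s - 2) := Real.rpow_pos_of_pos (by linarith) _
    have hCA : (a + b) ^ (s - 2) ≤ a ^ (s - 2) :=
      Real.rpow_le_rpow_of_nonpos ha (by linarith) (by linarith)
    have hCB : (a + b) ^ (s - 2) ≤ b ^ (s - 2) :=
      Real.rpow_le_rpow_of_nonpos hb (by linarith) (by linarith)
    have htan := tangent_ineq hs1 hs2 ha hab
    have ha1 : a ^ (s - 1) = a ^ (s - 2) * a := by
      rw [← Real.rpow_add_one ha.ne' (s - 2)]; ring_nf
    have hb1 : b ^ (s - 1) = b ^ (s - 2) * b := by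
      rw [← Real.rpow_add_one hb.ne' (s - 2)]; ring_nf
    rw [ha1, hb1] at htan
    have ht' : t ≤ a * b := (abs_le.mp ht).2
    nlinarith [mul_nonneg (sub_nonneg.mpr ht') (sub_nonneg.mpr hCA),
      mul_nonneg (sub_nonneg.mpr ht') (sub_nonneg.mpr hCB),
      mul_nonneg (sub_nonneg.mpr hab) (sub_nonneg.mpr htan),
      mul_nonneg (mul_nonneg (by linarith : (0:ℝ) ≤ s - 1)
        (mul_nonneg (sub_nonneg.mpr hab) (sub_nonneg.mpr hab)))
        (sub_nonneg.mpr hCB),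
      mul_nonneg (mul_nonneg (sub_nonneg.mpr ht') hC.le) (by linarith : (0:ℝ) ≤ 2 - s)]

theorem vector_inequality_s_lt_two (N : ℕ) (s : ℝ) (hs1 : 1 < s) (hs2 : s < 2) :
    ∃ c > (0 : ℝ), ∀ x₁ x₂ : EuclideanSpace ℝ (Fin N), ¬(x₁ = 0 ∧ x₂ = 0) →
      ⟪‖x₂‖ ^ (s - 2) • x₂ - ‖x₁‖ ^ (s - 2) • x₁, x₂ - x₁⟫
        ≥ c * (‖x₂‖ + ‖x₁‖) ^ (s - 2) * ‖x₂ - x₁‖ ^ 2 := by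
  refine ⟨s - 1, by linarith, fun x₁ x₂ hx => ?_⟩
  have ha : (0:ℝ) ≤ ‖x₁‖ := norm_nonneg _
  have hb : (0:ℝ) ≤ ‖x₂‖ := norm_nonneg _
  have ht : |⟪x₁, x₂⟫| ≤ ‖x₁‖ * ‖x₂‖ := abs_real_inner_le_norm x₁ x₂
  have hLHS : ⟪‖x₂‖ ^ (s - 2) • x₂ - ‖x₁‖ ^ (s - 2) • x₁, x₂ - x₁⟫
      = ‖x₁‖ ^ (s - 2) * ‖x₁‖ ^ 2 + ‖x₂‖ ^ (s - 2) * ‖x₂‖ ^ 2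
        - (‖x₁‖ ^ (s - 2) + ‖x₂‖ ^ (s - 2)) * ⟪x₁, x₂⟫ := by
    rw [inner_sub_left, inner_sub_right, inner_sub_right,
      real_inner_smul_left, real_inner_smul_left, real_inner_smul_left, real_inner_smul_left,
      real_inner_self_eq_norm_sq, real_inner_self_eq_norm_sq, real_inner_comm x₂ x₁]
    ring
  have hnorm : ‖x₂ - x₁‖ ^ 2 = ‖x₁‖ ^ 2 + ‖x₂‖ ^ 2 - 2 * ⟪x₁, x₂⟫ := by
    rw [norm_sub_sq_real, real_inner_comm x₂ x₁]
    ring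
  rw [hLHS, hnorm, ge_iff_le]
  have hne : ¬(‖x₁‖ = 0 ∧ ‖x₂‖ = 0) := by
    intro ⟨h1, h2⟩
    exact hx ⟨norm_eq_zero.mp h1, norm_eq_zero.mp h2⟩
  rcases le_total ‖x₁‖ ‖x₂‖ with hab | hab
  · have hb' : (0:ℝ) < ‖x₂‖ := by
      rcases eq_or_lt_of_le hb with h | h
      · exact absurd ⟨le_antisymm (h ▸ hab) ha, h.symm⟩ hne
      · exact h
    have hk := scalar_key hs1 hs2 ha hab hb' ht
    have hcomm : (‖x₂‖ + ‖x₁‖ : ℝ) = ‖x₁‖ + ‖x₂‖ := by ring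
    rw [hcomm]
    linarith
  · have ha' : (0:ℝ) < ‖x₁‖ := by
      rcases eq_or_lt_of_le ha with h | h
      · exact absurd ⟨h.symm, le_antisymm (h ▸ hab) hb⟩ hne
      · exact h
    have ht2 : |⟪x₁, x₂⟫| ≤ ‖x₂‖ * ‖x₁‖ := by rw [mul_comm]; exact ht
    have hk := scalar_key hs1 hs2 hb hab ha' ht2
    linarith
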